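/- arXiv:1810.13036 — 6 statements merged into one kernel-verified Lean document; each statement's English description precedes it below -/
import Mathlib

section
/- Let G be a finite simple graph with no induced K_{1,3} (claw-free). If G admits a proper k-coloring, then G admits an equitable k-coloring. -/
/-- A proper `k`-coloring: adjacent vertices receive distinct colors. -/
def IsProperColoring {V : Type*} (G : SimpleGraph V) {k : ℕ} (c : V → Fin k) : Prop :=
  ∀ u v : V, G.Adj u v → c u ≠ c v

/-- An equitable `k`-coloring: proper, and every color class has size `⌊n/k⌋` or `⌈n/k⌉`. -/
def IsEquitableColoring {V : Type*} [Fintype V] (G : SimpleGraph V) {k : ℕ}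
    (c : V → Fin k) : Prop :=
  IsProperColoring G c ∧ ∀ i : Fin k,
    (Finset.univ.filter fun v => c v = i).card = Fintype.card V / k ∨
    (Finset.univ.filter fun v => c v = i).card = (Fintype.card V + k - 1) / k

/-- `G` admits an equitable `k`-coloring. -/
def HasEquitableColoring {V : Type*} [Fintype V] (G : SimpleGraph V) (k : ℕ) : Prop :=
  ∃ c : V → Fin k, IsEquitableColoring G c

/-- Claw-free: no vertex has three pairwise non-adjacent neighbors (no induced `K_{1,3}`). -/
def ClawFree {V : Type*} (G : SimpleGraph V) : Prop :=
  ∀ v x y z : V, G.Adj v x → G.Adj v y → G.Adj v z →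
    x ≠ y → x ≠ z → y ≠ z → G.Adj x y ∨ G.Adj x z ∨ G.Adj y z

open Finset

section Aux
variable {V : Type*} {k : ℕ}

lemma claw_bound (G : SimpleGraph V) (hclaw : ClawFree G) {c : V → Fin k}
    (hc : IsProperColoring G c) (w : V) (i : Fin k) {s : Finset V}
    (hs : ∀ x ∈ s, G.Adj w x ∧ c x = i) : s.card ≤ 2 := by
  classical
  by_contra h
  push_neg at h
  obtain ⟨x, y, z, hx, hy, hz, hxy, hxz, hyz⟩ := Finset.two_lt_card_iff.mp h
  replace hx := hs x hx; replace hy := hs y hy; replace hz := hs z hz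
  have nxy : ¬ G.Adj x y := fun hadj => hc x y hadj (hx.2.trans hy.2.symm)
  have nxz : ¬ G.Adj x z := fun hadj => hc x z hadj (hx.2.trans hz.2.symm)
  have nyz : ¬ G.Adj y z := fun hadj => hc y z hadj (hy.2.trans hz.2.symm)
  rcases hclaw w x y z hx.1 hy.1 hz.1 hxy hxz hyz with h' | h' | h'
  exacts [nxy h', nxz h', nyz h']

lemma parent_exists {H : SimpleGraph V} {r v : V} (hreach : H.Reachable r v) (hne : v ≠ r) :
    ∃ w, H.Adj v w ∧ H.dist r w < H.dist r v := by
  obtain ⟨p, hp⟩ := hreach.exists_walk_length_eq_dist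
  have hd : H.dist r v ≠ 0 := by
    rw [SimpleGraph.dist_ne_zero_iff_ne_and_reachable]
    exact ⟨fun h => hne h.symm, hreach⟩
  obtain ⟨w, hadj, q, hq⟩ := SimpleGraph.Walk.exists_eq_cons_of_ne hne p.reverse
  refine ⟨w, hadj, ?_⟩
  have h1 : H.dist w r ≤ q.length := SimpleGraph.dist_le q
  have h2 : q.length + 1 = H.dist r v := by
    have := congrArg SimpleGraph.Walk.length hq
    simp only [SimpleGraph.Walk.length_reverse, SimpleGraph.Walk.length_cons] at this
    omega
  rw [SimpleGraph.dist_comm]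
  omega

def swapGraph {V : Type*} {k : ℕ} (G : SimpleGraph V) (c : V → Fin k) (i0 j0 : Fin k) :
    SimpleGraph V where
  Adj u v := G.Adj u v ∧ ((c u = i0 ∧ c v = j0) ∨ (c u = j0 ∧ c v = i0))
  symm := by
    constructor
    rintro u v ⟨h1, h2 | h2⟩
    · exact ⟨h1.symm, Or.inr ⟨h2.2, h2.1⟩⟩
    · exact ⟨h1.symm, Or.inl ⟨h2.2, h2.1⟩⟩
  loopless := ⟨fun v h => G.loopless.irrefl v h.1⟩

/-- In each connected component of the bipartite "swap" graph `H` between color classes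
`i0` and `j0`, the number of `i0`-vertices exceeds the number of `j0`-vertices by at most 1. -/
lemma component_bound [Fintype V] (G : SimpleGraph V) (hclaw : ClawFree G) {c : V → Fin k}
    (hc : IsProperColoring G c) {i0 j0 : Fin k} (hne : i0 ≠ j0) {H : SimpleGraph V}
    (hHadj : ∀ u v, H.Adj u v ↔
      (G.Adj u v ∧ ((c u = i0 ∧ c v = j0) ∨ (c u = j0 ∧ c v = i0))))
    (C : H.ConnectedComponent) {A B : Finset V}
    (hA : ∀ v, v ∈ A ↔ (c v = i0 ∧ H.connectedComponentMk v = C))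
    (hB : ∀ v, v ∈ B ↔ (c v = j0 ∧ H.connectedComponentMk v = C)) :
    A.card ≤ B.card + 1 := by
  classical
  rcases A.eq_empty_or_nonempty with h | ⟨r, hr⟩
  · simp [h]
  have hrC : H.connectedComponentMk r = C := ((hA r).mp hr).2
  have hdisj : Disjoint A B := by
    rw [Finset.disjoint_left]
    intro v hv hv'
    exact hne (((hA v).mp hv).1.symm.trans ((hB v).mp hv').1)
  set dom := (A ∪ B).erase r with hdom
  have hmemC : ∀ v ∈ A ∪ B, H.connectedComponentMk v = C := by
    intro v hv
    rcases Finset.mem_union.mp hv with h | h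
    exacts [((hA v).mp h).2, ((hB v).mp h).2]
  have hreach : ∀ v ∈ A ∪ B, H.Reachable r v := by
    intro v hv
    exact SimpleGraph.ConnectedComponent.eq.mp (hrC.trans (hmemC v hv).symm)
  have hpar : ∀ v : V, ∃ w, v ∈ dom → H.Adj v w ∧ H.dist r w < H.dist r v := by
    intro v
    by_cases hv : v ∈ dom
    · obtain ⟨hvr, hvu⟩ := Finset.mem_erase.mp hv
      obtain ⟨w, hw⟩ := parent_exists (hreach v hvu) hvr
      exact ⟨w, fun _ => hw⟩
    · exact ⟨v, fun h => absurd h hv⟩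
  choose f hf using hpar
  set t := univ.filter (fun p : V × V => H.Adj p.1 p.2 ∧ c p.1 = i0 ∧ c p.2 = j0 ∧
    H.connectedComponentMk p.2 = C) with ht
  have hcolor : ∀ v ∈ A ∪ B, c v = i0 ∨ c v = j0 := by
    intro v hv
    rcases Finset.mem_union.mp hv with h | h
    exacts [Or.inl ((hA v).mp h).1, Or.inr ((hB v).mp h).1]
  have hmaps : ∀ v ∈ dom, (if c v = i0 then (v, f v) else (f v, v)) ∈ t := by
    intro v hv
    have hvu : v ∈ A ∪ B := Finset.mem_of_mem_erase hv
    obtain ⟨hadj, _⟩ := hf v hv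
    have hfvC : H.connectedComponentMk (f v) = C := by
      rw [← hmemC v hvu]
      exact SimpleGraph.ConnectedComponent.eq.mpr hadj.symm.reachable
    have hadj' := (hHadj v (f v)).mp hadj
    by_cases hcv : c v = i0
    · rw [if_pos hcv]
      have hcfv : c (f v) = j0 := by
        rcases hadj'.2 with ⟨_, h⟩ | ⟨h, _⟩
        · exact h
        · exact absurd (hcv.symm.trans h) hne
      simp only [ht, mem_filter, mem_univ, true_and]
      exact ⟨hadj, hcv, hcfv, hfvC⟩
    · rw [if_neg hcv]
      have hcv' : c v = j0 := (hcolor v hvu).resolve_left hcv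
      have hcfv : c (f v) = i0 := by
        rcases hadj'.2 with ⟨h, _⟩ | ⟨_, h⟩
        · exact absurd h hcv
        · exact h
      simp only [ht, mem_filter, mem_univ, true_and]
      exact ⟨hadj.symm, hcfv, hcv', hmemC v hvu⟩
  have hinj : Set.InjOn (fun v => if c v = i0 then (v, f v) else (f v, v)) dom := by
    intro u hu v hv heq
    simp only [Finset.mem_coe] at hu hv
    have hdu := (hf u hu).2
    have hdv := (hf v hv).2
    by_cases hcu : c u = i0 <;> by_cases hcv : c v = i0 <;>
      simp only [hcu, hcv, if_true, if_false, if_pos, if_neg, not_false_iff,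
        Prod.mk.injEq] at heq
    · exact heq.1
    · exfalso
      obtain ⟨h1, h2⟩ := heq
      rw [← h1] at hdv
      rw [h2] at hdu
      omega
    · exfalso
      obtain ⟨h1, h2⟩ := heq
      rw [h1] at hdu
      rw [← h2] at hdv
      omega
    · exact heq.2
  have h1 : dom.card ≤ t.card := Finset.card_le_card_of_injOn _ hmaps hinj
  have h2 : t.card ≤ 2 * B.card := by
    have hsub : t ⊆ B.biUnion (fun b =>
        (univ.filter fun a => G.Adj b a ∧ c a = i0).image (fun a => (a, b))) := by
      intro p hp
      simp only [ht, mem_filter, mem_univ, true_and] at hp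
      obtain ⟨hadj, hp1, hp2, hpC⟩ := hp
      rw [Finset.mem_biUnion]
      refine ⟨p.2, (hB p.2).mpr ⟨hp2, hpC⟩, ?_⟩
      rw [Finset.mem_image]
      exact ⟨p.1, by simp [((hHadj _ _).mp hadj).1.symm, hp1], rfl⟩
    calc t.card ≤ _ := Finset.card_le_card hsub
      _ ≤ ∑ b ∈ B, ((univ.filter fun a => G.Adj b a ∧ c a = i0).image (fun a => (a, b))).card :=
          Finset.card_biUnion_le
      _ ≤ ∑ _b ∈ B, 2 := by
          refine Finset.sum_le_sum fun b _ => ?_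
          refine (Finset.card_image_le).trans ?_
          exact claw_bound G hclaw hc b i0 (fun x hx => by simpa using (Finset.mem_filter.mp hx).2)
      _ = 2 * B.card := by rw [Finset.sum_const, smul_eq_mul, mul_comm]
  have hcard : dom.card = (A ∪ B).card - 1 :=
    Finset.card_erase_of_mem (Finset.mem_union_left B hr)
  have hAB : (A ∪ B).card = A.card + B.card := Finset.card_union_of_disjoint hdisj
  have hApos : 0 < A.card := Finset.card_pos.mpr ⟨r, hr⟩
  omega

end Aux

lemma equitable_arith {k n : ℕ} (s : Fin k → ℕ) (hsum : ∑ j, s j = n)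
    (hbal : ∀ i j, s i ≤ s j + 1) (i : Fin k) :
    s i = n / k ∨ s i = (n + k - 1) / k := by
  classical
  have hk : 0 < k := i.pos
  obtain ⟨j0, -, hj0⟩ := Finset.exists_min_image univ s ⟨i, mem_univ i⟩
  set m := s j0 with hm
  have hup : ∀ j, s j ≤ m + 1 := fun j => hbal j j0
  have hlo : ∀ j, m ≤ s j := fun j => hj0 j (mem_univ j)
  have h1 : k * m ≤ n := by
    rw [← hsum]
    calc k * m = ∑ _j : Fin k, m := by
          rw [Finset.sum_const, card_univ, Fintype.card_fin, smul_eq_mul]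
      _ ≤ ∑ j, s j := Finset.sum_le_sum fun j _ => hlo j
  have h2 : n < k * (m + 1) := by
    have hsle : ∑ j ∈ univ.erase j0, s j ≤ (k - 1) * (m + 1) := by
      calc ∑ j ∈ univ.erase j0, s j ≤ ∑ _j ∈ univ.erase j0, (m + 1) :=
            Finset.sum_le_sum fun j _ => hup j
        _ = (k - 1) * (m + 1) := by
            rw [Finset.sum_const, Finset.card_erase_of_mem (mem_univ j0), card_univ,
              Fintype.card_fin, smul_eq_mul]
    calc n = m + ∑ j ∈ univ.erase j0, s j := by
          rw [← hsum, Finset.add_sum_erase _ s (mem_univ j0)]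
      _ ≤ m + (k - 1) * (m + 1) := Nat.add_le_add_left hsle m
      _ < (m + 1) + (k - 1) * (m + 1) := Nat.add_lt_add_right (Nat.lt_succ_self m) _
      _ = ((k - 1) + 1) * (m + 1) := by ring
      _ = k * (m + 1) := by rw [Nat.sub_add_cancel hk]
  have hdiv : n / k = m := Nat.div_eq_of_lt_le (by rw [mul_comm]; exact h1) (by rw [mul_comm]; exact h2)
  have hcases : s i = m ∨ s i = m + 1 := by have := hlo i; have := hup i; omega
  rcases hcases with h | h
  · exact Or.inl (h.trans hdiv.symm)
  · right
    have h3 : k * m + 1 ≤ n := by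
      have hsge : (k - 1) * m ≤ ∑ j ∈ univ.erase i, s j := by
        calc (k - 1) * m = ∑ _j ∈ univ.erase i, m := by
              rw [Finset.sum_const, Finset.card_erase_of_mem (mem_univ i), card_univ,
                Fintype.card_fin, smul_eq_mul]
          _ ≤ ∑ j ∈ univ.erase i, s j := Finset.sum_le_sum fun j _ => hlo j
      have hn : n = (m + 1) + ∑ j ∈ univ.erase i, s j := by
        rw [← hsum, ← h, Finset.add_sum_erase _ s (mem_univ i)]
      have hid : (m + 1) + (k - 1) * m = k * m + 1 := by
        have hkk : ((k - 1) + 1) = k := Nat.sub_add_cancel hk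
        calc (m + 1) + (k - 1) * m = ((k - 1) + 1) * m + 1 := by ring
          _ = k * m + 1 := by rw [hkk]
      calc k * m + 1 = (m + 1) + (k - 1) * m := hid.symm
        _ ≤ (m + 1) + ∑ j ∈ univ.erase i, s j := Nat.add_le_add_left hsge _
        _ = n := hn.symm
    have hn1 : 1 ≤ n := le_trans (Nat.le_add_left 1 (k * m)) h3
    have hrw : n + k - 1 = (n - 1) + k := by omega
    rw [hrw, Nat.add_div_right _ hk]
    have hda : (n - 1) / k = m := by
      refine Nat.div_eq_of_lt_le ?_ ?_
      · rw [mul_comm]; omega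
      · calc n - 1 < n := by omega
          _ < k * (m + 1) := h2
          _ = (m + 1) * k := mul_comm _ _
    rw [hda, h]

lemma main_aux {V : Type*} [Fintype V] (G : SimpleGraph V) (hclaw : ClawFree G) (k : ℕ) :
    ∀ (N : ℕ) (c : V → Fin k), IsProperColoring G c →
      (∑ i : Fin k, ((univ.filter fun v => c v = i).card) ^ 2) ≤ N →
      HasEquitableColoring G k := by
  intro N
  induction N using Nat.strong_induction_on with
  | _ N ih =>
  intro c hc hN
  classical
  by_cases hbal : ∀ i j : Fin k,
      (univ.filter fun v => c v = i).card ≤ (univ.filter fun v => c v = j).card + 1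
  · refine ⟨c, hc, fun i => ?_⟩
    have hsum : ∑ j : Fin k, (univ.filter fun v => c v = j).card = Fintype.card V := by
      rw [← Finset.card_univ,
        Finset.card_eq_sum_card_fiberwise (f := c) (t := univ) (fun x _ => Finset.mem_univ (c x))]
    exact equitable_arith _ hsum hbal i
  · push_neg at hbal
    obtain ⟨i0, j0, hij⟩ := hbal
    have hne : i0 ≠ j0 := fun h => by rw [h] at hij; omega
    set H : SimpleGraph V := swapGraph G c i0 j0 with hH
    haveI : Fintype H.ConnectedComponent := Fintype.ofFinite _
    have hfib : ∀ i : Fin k, (univ.filter fun v => c v = i).card =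
        ∑ C : H.ConnectedComponent,
          (univ.filter fun v => c v = i ∧ H.connectedComponentMk v = C).card := by
      intro i
      rw [Finset.card_eq_sum_card_fiberwise (f := H.connectedComponentMk) (t := univ)
        (fun x _ => Finset.mem_univ _)]
      exact Finset.sum_congr rfl fun C _ => by rw [Finset.filter_filter]
    have hex : ∃ C : H.ConnectedComponent,
        (univ.filter fun v => c v = j0 ∧ H.connectedComponentMk v = C).card <
        (univ.filter fun v => c v = i0 ∧ H.connectedComponentMk v = C).card := by
      by_contra h
      push_neg at h
      have hle := Finset.sum_le_sum (fun C (_ : C ∈ (univ : Finset H.ConnectedComponent)) => h C)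
      rw [← hfib i0, ← hfib j0] at hle
      omega
    obtain ⟨C, hCx⟩ := hex
    have hCb := component_bound G hclaw hc hne (fun u v => Iff.rfl) C
      (A := univ.filter fun v => c v = i0 ∧ H.connectedComponentMk v = C)
      (B := univ.filter fun v => c v = j0 ∧ H.connectedComponentMk v = C)
      (fun v => by simp) (fun v => by simp)
    set c' : V → Fin k := fun v =>
      if H.connectedComponentMk v = C then
        (if c v = i0 then j0 else if c v = j0 then i0 else c v)
      else c v with hc'def
    have key : ∀ u v, G.Adj u v → H.connectedComponentMk u = C →
        H.connectedComponentMk v ≠ C →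
        ¬((c u = i0 ∧ c v = j0) ∨ (c u = j0 ∧ c v = i0)) := by
      intro u v hadj huC hvC habs
      apply hvC
      rw [← huC]
      have hH' : H.Adj u v := ⟨hadj, habs⟩
      exact SimpleGraph.ConnectedComponent.eq.mpr hH'.symm.reachable
    have hc' : IsProperColoring G c' := by
      intro u v hadj heq
      have hG := hc u v hadj
      by_cases hu : H.connectedComponentMk u = C <;>
        by_cases hv : H.connectedComponentMk v = C
      · simp only [hc'def, if_pos hu, if_pos hv] at heq
        split_ifs at heq <;> simp_all
      · simp only [hc'def, if_pos hu, if_neg hv] at heq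
        split_ifs at heq with h1 h2
        · exact key u v hadj hu hv (Or.inl ⟨h1, heq.symm⟩)
        · exact key u v hadj hu hv (Or.inr ⟨h2, heq.symm⟩)
        · exact hG heq
      · simp only [hc'def, if_neg hu, if_pos hv] at heq
        split_ifs at heq with h1 h2
        · exact key v u hadj.symm hv hu (Or.inl ⟨h1, heq⟩)
        · exact key v u hadj.symm hv hu (Or.inr ⟨h2, heq⟩)
        · exact hG heq
      · simp only [hc'def, if_neg hu, if_neg hv] at heq
        exact hG heq
    have hclass : ∀ i : Fin k, i ≠ i0 → i ≠ j0 →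
        (univ.filter fun v => c' v = i) = (univ.filter fun v => c v = i) := by
      intro i h1 h2
      apply Finset.filter_congr
      intro v _
      simp only [hc'def]
      split_ifs with ha hb hcc
      · constructor
        · intro h; exact absurd h.symm h2
        · intro h; exact absurd (h.symm.trans hb) h1
      · constructor
        · intro h; exact absurd h.symm h1
        · intro h; exact absurd (h.symm.trans hcc) h2
      · exact Iff.rfl
      · exact Iff.rfl
    have hseti0 : (univ.filter fun v => c' v = i0) =
        (univ.filter fun v => c v = j0 ∧ H.connectedComponentMk v = C) ∪
        (univ.filter fun v => c v = i0 ∧ ¬ H.connectedComponentMk v = C) := by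
      ext v
      simp only [Finset.mem_union, Finset.mem_filter, Finset.mem_univ, true_and, hc'def]
      split_ifs with ha hb hcc
      · constructor
        · intro h; exact absurd h.symm hne
        · rintro (⟨h, -⟩ | ⟨-, h⟩)
          · exact absurd (hb.symm.trans h) hne
          · exact absurd ha h
      · constructor
        · intro _; exact Or.inl ⟨hcc, ha⟩
        · intro _; rfl
      · constructor
        · intro h; exact absurd h hb
        · rintro (⟨h, -⟩ | ⟨-, h⟩)
          · exact absurd h hcc
          · exact absurd ha h
      · constructor
        · intro h; exact Or.inr ⟨h, ha⟩
        · rintro (⟨-, h⟩ | ⟨h, -⟩)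
          · exact absurd h ha
          · exact h
    have hsetj0 : (univ.filter fun v => c' v = j0) =
        (univ.filter fun v => c v = i0 ∧ H.connectedComponentMk v = C) ∪
        (univ.filter fun v => c v = j0 ∧ ¬ H.connectedComponentMk v = C) := by
      ext v
      simp only [Finset.mem_union, Finset.mem_filter, Finset.mem_univ, true_and, hc'def]
      split_ifs with ha hb hcc
      · constructor
        · intro _; exact Or.inl ⟨hb, ha⟩
        · intro _; rfl
      · constructor
        · intro h; exact absurd h hne
        · rintro (⟨h, -⟩ | ⟨-, h⟩)
          · exact absurd h hb
          · exact absurd ha h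
      · constructor
        · intro h; exact absurd h hcc
        · rintro (⟨h, -⟩ | ⟨h, -⟩)
          · exact absurd h hb
          · exact absurd h hcc
      · constructor
        · intro h; exact Or.inr ⟨h, ha⟩
        · rintro (⟨-, h⟩ | ⟨h, -⟩)
          · exact absurd h ha
          · exact h
    have hspliti0 : (univ.filter fun v => c v = i0 ∧ H.connectedComponentMk v = C).card +
        (univ.filter fun v => c v = i0 ∧ ¬ H.connectedComponentMk v = C).card =
        (univ.filter fun v => c v = i0).card := by
      rw [← Finset.filter_filter, ← Finset.filter_filter,
        Finset.card_filter_add_card_filter_not]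
    have hsplitj0 : (univ.filter fun v => c v = j0 ∧ H.connectedComponentMk v = C).card +
        (univ.filter fun v => c v = j0 ∧ ¬ H.connectedComponentMk v = C).card =
        (univ.filter fun v => c v = j0).card := by
      rw [← Finset.filter_filter, ← Finset.filter_filter,
        Finset.card_filter_add_card_filter_not]
    have hdisj1 : Disjoint (univ.filter fun v => c v = j0 ∧ H.connectedComponentMk v = C)
        (univ.filter fun v => c v = i0 ∧ ¬ H.connectedComponentMk v = C) := by
      rw [Finset.disjoint_left]
      intro v hv hv'
      simp only [Finset.mem_filter] at hv hv'
      exact hne (hv'.2.1.symm.trans hv.2.1)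
    have hdisj2 : Disjoint (univ.filter fun v => c v = i0 ∧ H.connectedComponentMk v = C)
        (univ.filter fun v => c v = j0 ∧ ¬ H.connectedComponentMk v = C) := by
      rw [Finset.disjoint_left]
      intro v hv hv'
      simp only [Finset.mem_filter] at hv hv'
      exact hne (hv.2.1.symm.trans hv'.2.1)
    have hsize_i0 : (univ.filter fun v => c' v = i0).card =
        (univ.filter fun v => c v = i0).card - 1 := by
      rw [hseti0, Finset.card_union_of_disjoint hdisj1]
      omega
    have hsize_j0 : (univ.filter fun v => c' v = j0).card =
        (univ.filter fun v => c v = j0).card + 1 := by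
      rw [hsetj0, Finset.card_union_of_disjoint hdisj2]
      omega
    have hji : j0 ∈ (univ : Finset (Fin k)).erase i0 :=
      Finset.mem_erase.mpr ⟨hne.symm, Finset.mem_univ _⟩
    have hΦ : (∑ i : Fin k, ((univ.filter fun v => c' v = i).card) ^ 2) <
        ∑ i : Fin k, ((univ.filter fun v => c v = i).card) ^ 2 := by
      rw [← Finset.add_sum_erase _ (fun i => ((univ.filter fun v => c' v = i).card) ^ 2)
            (Finset.mem_univ i0),
          ← Finset.add_sum_erase _ (fun i => ((univ.filter fun v => c' v = i).card) ^ 2) hji,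
          ← Finset.add_sum_erase _ (fun i => ((univ.filter fun v => c v = i).card) ^ 2)
            (Finset.mem_univ i0),
          ← Finset.add_sum_erase _ (fun i => ((univ.filter fun v => c v = i).card) ^ 2) hji]
      have htail : ∑ i ∈ ((univ : Finset (Fin k)).erase i0).erase j0,
          ((univ.filter fun v => c' v = i).card) ^ 2 =
          ∑ i ∈ ((univ : Finset (Fin k)).erase i0).erase j0,
          ((univ.filter fun v => c v = i).card) ^ 2 := by
        refine Finset.sum_congr rfl fun i hi => ?_
        obtain ⟨hi1, hi2⟩ := Finset.mem_erase.mp hi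
        obtain ⟨hi3, -⟩ := Finset.mem_erase.mp hi2
        rw [hclass i hi3 hi1]
      rw [htail, hsize_i0, hsize_j0]
      set a := (univ.filter fun v => c v = i0).card with hadef
      set b := (univ.filter fun v => c v = j0).card with hbdef
      obtain ⟨a2, ha2⟩ : ∃ a2, a = a2 + 1 := ⟨a - 1, by omega⟩
      rw [ha2]
      simp only [Nat.add_sub_cancel]
      have hb : b < a2 := by omega
      nlinarith
    exact ih _ (lt_of_lt_of_le hΦ hN) c' hc' le_rfl


/-- A claw-free graph admitting a proper `k`-coloring admits an equitable `k`-coloring. -/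
theorem equitable_coloring_of_clawfree_of_colorable
    {V : Type*} [Fintype V] (G : SimpleGraph V) (k : ℕ) (hclaw : ClawFree G)
    (c : V → Fin k) (hc : IsProperColoring G c) :
    HasEquitableColoring G k := by
  exact main_aux G hclaw k _ c hc le_rfl
end

section
/- Let a₁,…,aₙ be positive integers and k, B positive integers with a₁ + ⋯ + aₙ = kB. Let G be the disjoint union of the antiflowers F₋(a₁,k), …, F₋(aₙ,k). Then G admits an equitable k-coloring if and only if there is a function σ : {1,…,n} → {1,…,k} such that for every i ∈ {1,…,k}, the sum of a_j over all j with σ(j) = i equals B. -/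
lemma sigma_filter_card' {m : ℕ} {V : Fin m → Type*} [∀ j, Fintype (V j)]
    (p : (Σ j, V j) → Prop) [DecidablePred p] :
    (Finset.univ.filter p).card = ∑ j, (Finset.univ.filter fun x : V j => p ⟨j, x⟩).card := by
  rw [Finset.card_filter, ← Finset.univ_sigma_univ, Finset.sum_sigma]
  exact Finset.sum_congr rfl fun j _ => (Finset.card_filter _ _).symm

lemma sum_filter_card' {α β : Type*} [Fintype α] [Fintype β] (p : α ⊕ β → Prop) [DecidablePred p] :
    (Finset.univ.filter p).card
      = (Finset.univ.filter fun x => p (.inl x)).card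
        + (Finset.univ.filter fun y => p (.inr y)).card := by
  rw [Finset.card_filter, Fintype.sum_sum_type, Finset.card_filter, Finset.card_filter]

lemma ceil_div' (K M : ℕ) : ((K+1) * M + (K+1) - 1) / (K+1) = M := by
  have h1 : (K+1) * M + (K+1) - 1 = K + M * (K+1) := by rw [mul_comm]; omega
  rw [h1, Nat.add_mul_div_right _ _ (by omega : 0 < K+1), Nat.div_eq_of_lt (by omega)]
  omega

lemma count_classes {m K : ℕ} {L R : Fin m → Type*} [∀ j, Fintype (L j)] [∀ j, Fintype (R j)]
    (hLcard : ∀ j, Fintype.card (L j) = K) (A : Fin m → ℕ)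
    (hRcard : ∀ j, Fintype.card (R j) = A j + 1)
    (c : ((j : Fin m) × (L j ⊕ R j)) → Fin (K+1)) (σ : Fin m → Fin (K+1))
    (hinj : ∀ j, Function.Injective fun x : L j => c ⟨j, .inl x⟩)
    (hne : ∀ j x, c ⟨j, .inl x⟩ ≠ σ j)
    (hR : ∀ j y, c ⟨j, .inr y⟩ = σ j) (i : Fin (K+1)) :
    (Finset.univ.filter fun v => c v = i).card
      = m + ∑ j ∈ Finset.univ.filter (fun j => σ j = i), A j := by
  rw [sigma_filter_card']
  have key : ∀ j, (Finset.univ.filter fun x : L j ⊕ R j => c ⟨j, x⟩ = i).card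
      = 1 + (if σ j = i then A j else 0) := by
    intro j
    rw [sum_filter_card']
    have hright : (Finset.univ.filter fun y : R j => c ⟨j, .inr y⟩ = i).card
        = if σ j = i then A j + 1 else 0 := by
      by_cases h : σ j = i
      · simp [hR, h, Finset.filter_true_of_mem, hRcard j]
      · simp [hR, h]
    have hleft : (Finset.univ.filter fun x : L j => c ⟨j, .inl x⟩ = i).card
        = if σ j = i then 0 else 1 := by
      by_cases h : σ j = i
      · rw [if_pos h, Finset.card_eq_zero, Finset.filter_eq_empty_iff]
        intro x _; rw [← h]; exact hne j x
      · rw [if_neg h, Finset.card_eq_one]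
        have himg : Finset.univ.image (fun x : L j => c ⟨j, .inl x⟩) = {σ j}ᶜ := by
          apply Finset.eq_of_subset_of_card_le
          · intro z hz
            simp only [Finset.mem_image] at hz
            obtain ⟨x, _, rfl⟩ := hz
            simpa using hne j x
          · rw [Finset.card_compl, Finset.card_image_of_injective _ (hinj j)]
            simp [hLcard j]
        have hi : i ∈ Finset.univ.image (fun x : L j => c ⟨j, .inl x⟩) := by
          rw [himg]; simpa using Ne.symm h
        obtain ⟨x, -, hx⟩ := Finset.mem_image.mp hi
        refine ⟨x, ?_⟩
        ext y
        simp only [Finset.mem_filter, Finset.mem_univ, true_and, Finset.mem_singleton]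
        constructor
        · intro hy; exact hinj j (hy.trans hx.symm)
        · rintro rfl; exact hx
    rw [hleft, hright]
    by_cases h : σ j = i <;> simp [h] <;> omega
  calc ∑ j, (Finset.univ.filter fun x : L j ⊕ R j => c ⟨j, x⟩ = i).card
      = ∑ j : Fin m, (1 + if σ j = i then A j else 0) :=
        Finset.sum_congr rfl fun j _ => key j
    _ = m + ∑ j ∈ Finset.univ.filter (fun j => σ j = i), A j := by
        rw [Finset.sum_add_distrib, Finset.sum_const, Finset.sum_filter]
        simp

/-- The `(a,k)`-antiflower: the join of a clique on `k-1` vertices (the `inl` part)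
with an independent set on `a+1` vertices (the `inr` part). -/
def antiflower (a k : ℕ) : SimpleGraph (Fin (k - 1) ⊕ Fin (a + 1)) where
  Adj u v := u ≠ v ∧ (u.isLeft ∨ v.isLeft)
  symm := ⟨fun _ _ h => ⟨h.1.symm, h.2.symm⟩⟩
  loopless := ⟨fun _ h => h.1 rfl⟩

/-- Disjoint union of an indexed family of graphs: vertices in different summands are
never adjacent, and within a summand adjacency is that of the summand. -/
def disjUnion {n : ℕ} {V : Fin n → Type*} (G : ∀ j, SimpleGraph (V j)) :
    SimpleGraph ((j : Fin n) × V j) where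
  Adj u v := ∃ (j : Fin n) (x y : V j), u = ⟨j, x⟩ ∧ v = ⟨j, y⟩ ∧ (G j).Adj x y
  symm := ⟨by rintro u v ⟨j, x, y, rfl, rfl, h⟩; exact ⟨j, y, x, rfl, rfl, h.symm⟩⟩
  loopless := ⟨by
    rintro u ⟨j, x, y, rfl, h2, h⟩
    obtain rfl : x = y := by simpa using h2
    exact (G j).loopless.irrefl x h⟩

/-- The disjoint union of the antiflowers `F₋(a₁,k), …, F₋(aₙ,k)` admits an equitable
`k`-coloring iff the items `a₁,…,aₙ` can be packed into `k` bins each summing exactly `B`. -/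
theorem equitable_coloring_disjoint_antiflowers_iff_binpacking
    (n k B : ℕ) (a : Fin n → ℕ) (ha : ∀ j, 1 ≤ a j) (hk : 1 ≤ k) (hB : 1 ≤ B)
    (hsum : ∑ j, a j = k * B) :
    HasEquitableColoring (disjUnion fun j => antiflower (a j) k) k ↔
      ∃ σ : Fin n → Fin k, ∀ i : Fin k,
        ∑ j ∈ Finset.univ.filter (fun j => σ j = i), a j = B := by
  obtain ⟨K, rfl⟩ : ∃ K, k = K + 1 := ⟨k - 1, by omega⟩
  have hV : Fintype.card ((j : Fin n) × (Fin (K+1-1) ⊕ Fin (a j + 1))) = (K+1) * (n + B) := by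
    rw [Fintype.card_sigma]
    have h1 : ∀ j : Fin n, Fintype.card (Fin (K+1-1) ⊕ Fin (a j + 1)) = (K+1) + a j := by
      intro j; simp; omega
    rw [Finset.sum_congr rfl fun j _ => h1 j, Finset.sum_add_distrib, Finset.sum_const, hsum]
    simp [Finset.card_univ]; ring
  have hvd1 : Fintype.card ((j : Fin n) × (Fin (K+1-1) ⊕ Fin (a j + 1))) / (K+1) = n + B := by
    rw [hV]; exact Nat.mul_div_cancel_left _ (by omega)
  have hvd2 : (Fintype.card ((j : Fin n) × (Fin (K+1-1) ⊕ Fin (a j + 1))) + (K+1) - 1) / (K+1)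
      = n + B := by
    rw [hV]; exact ceil_div' K (n + B)
  constructor
  · rintro ⟨c, hprop, hsz⟩
    set σ : Fin n → Fin (K+1) := fun j => c ⟨j, Sum.inr 0⟩ with hσdef
    have hadj : ∀ (j : Fin n) (x y : Fin (K+1-1) ⊕ Fin (a j + 1)),
        (antiflower (a j) (K+1)).Adj x y → c ⟨j, x⟩ ≠ c ⟨j, y⟩ :=
      fun j x y h => hprop _ _ ⟨j, x, y, rfl, rfl, h⟩
    have hinj : ∀ j, Function.Injective fun x : Fin (K+1-1) => c ⟨j, Sum.inl x⟩ := by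
      intro j x y hxy
      by_contra hne
      exact hadj j (Sum.inl x) (Sum.inl y) ⟨fun h => hne (Sum.inl.inj h), Or.inl rfl⟩ hxy
    have hlr : ∀ (j : Fin n) (x : Fin (K+1-1)) (y : Fin (a j + 1)),
        c ⟨j, Sum.inl x⟩ ≠ c ⟨j, Sum.inr y⟩ :=
      fun j x y => hadj j _ _ ⟨by simp, Or.inl rfl⟩
    have hR : ∀ (j : Fin n) (y : Fin (a j + 1)), c ⟨j, Sum.inr y⟩ = σ j := by
      intro j y
      have hSc : (Finset.univ.image (fun x : Fin (K+1-1) => c ⟨j, Sum.inl x⟩))ᶜ.card = 1 := by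
        rw [Finset.card_compl, Finset.card_image_of_injective _ (hinj j)]
        simp
      have hmem : ∀ z : Fin (a j + 1),
          c ⟨j, Sum.inr z⟩ ∈ (Finset.univ.image (fun x : Fin (K+1-1) => c ⟨j, Sum.inl x⟩))ᶜ := by
        intro z
        rw [Finset.mem_compl, Finset.mem_image]
        rintro ⟨x, -, hx⟩
        exact hlr j x z hx
      exact Finset.card_le_one.mp (le_of_eq hSc) _ (hmem y) _ (hmem 0)
    have hne : ∀ (j : Fin n) (x : Fin (K+1-1)), c ⟨j, Sum.inl x⟩ ≠ σ j := fun j x => hlr j x 0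
    refine ⟨σ, fun i => ?_⟩
    have hcnt : (Finset.univ.filter fun v => c v = i).card
        = n + ∑ j ∈ Finset.univ.filter (fun j => σ j = i), a j :=
      count_classes (fun j => by simp) a (fun j => by simp) c σ hinj hne hR i
    have hnb : n + ∑ j ∈ Finset.univ.filter (fun j => σ j = i), a j = n + B := by
      rcases hsz i with h | h
      · exact hcnt.symm.trans (h.trans hvd1)
      · exact hcnt.symm.trans (h.trans hvd2)
    omega
  · rintro ⟨σ, hσ⟩
    refine ⟨fun v => Sum.elim (fun x => (σ v.1).succAbove x) (fun _ => σ v.1) v.2, ?_, fun i => ?_⟩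
    · rintro u v ⟨j, x, y, rfl, rfl, hxy, hL⟩
      rcases x with x | x <;> rcases y with y | y
      · exact fun h => hxy (congrArg Sum.inl (Fin.succAbove_right_injective h))
      · exact Fin.succAbove_ne (σ j) x
      · exact (Fin.succAbove_ne (σ j) y).symm
      · simp at hL
    · left
      have hcnt : (Finset.univ.filter fun v :
            (j : Fin n) × (Fin (K+1-1) ⊕ Fin (a j + 1)) =>
            Sum.elim (fun x => (σ v.1).succAbove x) (fun _ => σ v.1) v.2 = i).card
          = n + ∑ j ∈ Finset.univ.filter (fun j => σ j = i), a j :=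
        count_classes (fun j => by simp) a (fun j => by simp) _ σ
          (fun j => fun x y h => Fin.succAbove_right_injective h)
          (fun j x => Fin.succAbove_ne (σ j) x)
          (fun j y => rfl) i
      rw [hσ i] at hcnt
      exact hcnt.trans hvd1.symm
end

section
/- Let k ≥ 2 and a ≥ 1, and let H be the (a,k)-trem with cut-vertex set Y = {y₁,…,y_a}. In every proper k-coloring of H, all vertices of Y receive the same color. -/
/-- The `(a,k)`-trem: vertices `inl i` (`0`-indexed: `inl i` is `y_{i+1}`), together with
`2a` pairwise disjoint cliques of size `k-1`: `inr (i, false, x)` lies in `Q_{i+1}` and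
`inr (i, true, x)` lies in `Q_{i+1}'`. Each `y_{i+1}` is adjacent to every vertex of
`Q_{i+1}` and `Q_{i+1}'`, and additionally to every vertex of `Q_{i+2}` (when `i+2 ≤ a`). -/
def trem (a k : ℕ) : SimpleGraph (Fin a ⊕ Fin a × Bool × Fin (k - 1)) where
  Adj u v :=
    match u, v with
    | .inl _, .inl _ => False
    | .inl i, .inr (j, b, _) => j = i ∨ (b = false ∧ (j : ℕ) = (i : ℕ) + 1)
    | .inr (j, b, _), .inl i => j = i ∨ (b = false ∧ (j : ℕ) = (i : ℕ) + 1)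
    | .inr (i, b, x), .inr (j, c, y) => i = j ∧ b = c ∧ x ≠ y
  symm := by
    constructor
    rintro (i | ⟨j, b, x⟩) (i' | ⟨j', b', x'⟩) h
    · exact h
    · exact h
    · exact h
    · exact ⟨h.1.symm, h.2.1.symm, h.2.2.symm⟩
  loopless := by
    constructor
    rintro (i | ⟨j, b, x⟩) h
    · exact h
    · exact h.2.2 rfl

/-- In every proper `k`-coloring of the `(a,k)`-trem, the cut vertices `y₁,…,y_a`
all receive the same color. -/
theorem trem_proper_coloring_cutvertices_monochromatic (a k : ℕ) (ha : 1 ≤ a) (hk : 2 ≤ k)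
    (c : Fin a ⊕ Fin a × Bool × Fin (k - 1) → Fin k)
    (hc : ∀ u v, (trem a k).Adj u v → c u ≠ c v) :
    ∀ i j : Fin a, c (Sum.inl i) = c (Sum.inl j) := by
  have key : ∀ (n : ℕ) (h : n + 1 < a),
      c (Sum.inl ⟨n, Nat.lt_of_succ_lt h⟩) = c (Sum.inl ⟨n+1, h⟩) := by
    intro n h
    set i : Fin a := ⟨n, Nat.lt_of_succ_lt h⟩ with hi
    set j : Fin a := ⟨n+1, h⟩ with hj
    by_contra hne
    set f : Fin (k-1) → Fin k := fun x => c (Sum.inr (j, false, x)) with hf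
    have hinj : Function.Injective f := by
      intro x y hxy
      by_contra hxy'
      exact hc (Sum.inr (j, false, x)) (Sum.inr (j, false, y)) ⟨rfl, rfl, hxy'⟩ hxy
    have himage : (Finset.univ.image f).card = k - 1 := by
      rw [Finset.card_image_of_injective _ hinj, Finset.card_univ, Fintype.card_fin]
    have hsub : Finset.univ.image f ⊆ Finset.univ \ {c (Sum.inl j)} := by
      intro y hy
      simp only [Finset.mem_image] at hy
      obtain ⟨x, _, rfl⟩ := hy
      simp only [Finset.mem_sdiff, Finset.mem_univ, Finset.mem_singleton, true_and]
      exact hc (Sum.inr (j, false, x)) (Sum.inl j) (Or.inl rfl)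
    have hcard : (Finset.univ \ {c (Sum.inl j)} : Finset (Fin k)).card = k - 1 := by
      rw [Finset.card_sdiff_of_subset (by simp), Finset.card_univ, Fintype.card_fin,
        Finset.card_singleton]
    have heq : Finset.univ.image f = Finset.univ \ {c (Sum.inl j)} :=
      Finset.eq_of_subset_of_card_le hsub (by rw [hcard, himage])
    have hmem : c (Sum.inl i) ∈ Finset.univ \ {c (Sum.inl j)} := by
      simp [hne]
    rw [← heq] at hmem
    obtain ⟨x, _, hx⟩ := Finset.mem_image.mp hmem
    exact hc (Sum.inr (j, false, x)) (Sum.inl i) (Or.inr ⟨rfl, rfl⟩) hx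
  have all0 : ∀ (n : ℕ) (h : n < a), c (Sum.inl ⟨n, h⟩) = c (Sum.inl ⟨0, ha⟩) := by
    intro n
    induction n with
    | zero => intro h; rfl
    | succ m ih =>
      intro h
      rw [← key m h]
      exact ih _
  intro i j
  have h1 := all0 i i.isLt
  have h2 := all0 j j.isLt
  simp only [Fin.eta] at h1 h2
  rw [h1, h2]
end

section
/- Let k ≥ 2 and a ≥ 1, and let H be the (a,k)-trem with cut-vertex set Y = {y₁,…,y_a}. In every proper k-coloring of H, the (common) color of the vertices of Y is used exactly a times, and each of the other k−1 colors is used exactly 2a times (exactly once inside each of the 2a cliques of size k−1). -/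
/-- In every proper `k`-coloring of the `(a,k)`-trem, the common color of the cut vertices
`y₁,…,y_a` is used exactly `a` times, and each of the other `k-1` colors is used exactly
`2a` times — exactly once inside each of the `2a` cliques of size `k-1`. -/
theorem trem_proper_coloring_class_sizes (a k : ℕ) (ha : 1 ≤ a) (hk : 2 ≤ k)
    (c : Fin a ⊕ Fin a × Bool × Fin (k - 1) → Fin k)
    (hc : ∀ u v, (trem a k).Adj u v → c u ≠ c v) :
    (Finset.univ.filter fun v => c v = c (Sum.inl ⟨0, ha⟩)).card = a ∧
    ∀ j : Fin k, j ≠ c (Sum.inl ⟨0, ha⟩) →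
      (Finset.univ.filter fun v => c v = j).card = 2 * a ∧
      ∀ (i : Fin a) (b : Bool), ∃! x : Fin (k - 1), c (Sum.inr (i, b, x)) = j := by
  -- injectivity within each clique
  have hinj : ∀ (i : Fin a) (b : Bool),
      Function.Injective (fun x : Fin (k - 1) => c (Sum.inr (i, b, x))) := by
    intro i b x y hxy
    by_contra hne
    exact hc (Sum.inr (i, b, x)) (Sum.inr (i, b, y)) ⟨rfl, rfl, hne⟩ hxy
  -- adjacency of y_i to its cliques
  have hadj1 : ∀ (i : Fin a) (b : Bool) (x : Fin (k - 1)),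
      c (Sum.inr (i, b, x)) ≠ c (Sum.inl i) := by
    intro i b x
    exact hc (Sum.inr (i, b, x)) (Sum.inl i) (Or.inl rfl)
  -- the clique colors are exactly everything except c (inl i)
  have hcard : ∀ (i : Fin a) (b : Bool),
      (Finset.univ.image fun x : Fin (k - 1) => c (Sum.inr (i, b, x)))
        = Finset.univ.erase (c (Sum.inl i)) := by
    intro i b
    apply Finset.eq_of_subset_of_card_le
    · intro j hj
      simp only [Finset.mem_image, Finset.mem_univ, true_and] at hj
      obtain ⟨x, rfl⟩ := hj
      exact Finset.mem_erase.mpr ⟨hadj1 i b x, Finset.mem_univ _⟩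
    · rw [Finset.card_erase_of_mem (Finset.mem_univ _),
        Finset.card_image_of_injective _ (hinj i b)]
      simp
  -- all y's have the same color
  have hy : ∀ (n : ℕ) (hn : n < a), c (Sum.inl ⟨n, hn⟩) = c (Sum.inl ⟨0, ha⟩) := by
    intro n
    induction n with
    | zero => intro hn; rfl
    | succ n ih =>
      intro hn1
      have hn : n < a := Nat.lt_of_succ_lt hn1
      have hnot : c (Sum.inl ⟨n, hn⟩) ∉
          Finset.univ.erase (c (Sum.inl (⟨n + 1, hn1⟩ : Fin a))) := by
        rw [← hcard ⟨n + 1, hn1⟩ false]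
        simp only [Finset.mem_image, Finset.mem_univ, true_and, not_exists]
        intro x hx
        have hadj : (trem a k).Adj (Sum.inl ⟨n, hn⟩) (Sum.inr (⟨n + 1, hn1⟩, false, x)) := by
          show (⟨n + 1, hn1⟩ : Fin a) = ⟨n, hn⟩ ∨
            (false = false ∧ ((⟨n + 1, hn1⟩ : Fin a) : ℕ) = ((⟨n, hn⟩ : Fin a) : ℕ) + 1)
          exact Or.inr ⟨rfl, rfl⟩
        exact hc _ _ hadj hx.symm
      have heq : c (Sum.inl (⟨n + 1, hn1⟩ : Fin a)) = c (Sum.inl ⟨n, hn⟩) := by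
        by_contra h
        exact hnot (Finset.mem_erase.mpr ⟨fun hh => h hh.symm, Finset.mem_univ _⟩)
      rw [heq]; exact ih hn
  have hyi : ∀ i : Fin a, c (Sum.inl i) = c (Sum.inl ⟨0, ha⟩) := fun ⟨n, hn⟩ => hy n hn
  constructor
  · -- the color class of the y's has size a
    have : (Finset.univ.filter fun v => c v = c (Sum.inl ⟨0, ha⟩))
        = Finset.univ.map ⟨Sum.inl, Sum.inl_injective⟩ := by
      ext v
      simp only [Finset.mem_filter, Finset.mem_univ, true_and, Finset.mem_map,
        Function.Embedding.coeFn_mk]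
      constructor
      · intro hv
        match v with
        | Sum.inl i => exact ⟨i, rfl⟩
        | Sum.inr (i, b, x) =>
          exact absurd hv (by rw [← hyi i]; exact hadj1 i b x)
      · rintro ⟨i, -, rfl⟩
        exact hyi i
    rw [this, Finset.card_map, Finset.card_univ, Fintype.card_fin]
  · intro j hj
    -- existence and uniqueness in each clique
    have hexu : ∀ (i : Fin a) (b : Bool), ∃! x : Fin (k - 1), c (Sum.inr (i, b, x)) = j := by
      intro i b
      have hjmem : j ∈ Finset.univ.image fun x : Fin (k - 1) => c (Sum.inr (i, b, x)) := by
        rw [hcard i b]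
        exact Finset.mem_erase.mpr ⟨by rw [hyi i]; exact hj, Finset.mem_univ _⟩
      simp only [Finset.mem_image, Finset.mem_univ, true_and] at hjmem
      obtain ⟨x, hx⟩ := hjmem
      exact ⟨x, hx, fun y hy => hinj i b (show c (Sum.inr (i, b, y)) = c (Sum.inr (i, b, x)) from hy.trans hx.symm)⟩
    refine ⟨?_, hexu⟩
    classical
    set g : Fin a × Bool → Fin (k - 1) := fun p => (hexu p.1 p.2).choose with hg
    have hgspec : ∀ p : Fin a × Bool, c (Sum.inr (p.1, p.2, g p)) = j :=
      fun p => (hexu p.1 p.2).choose_spec.1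
    have hemb : Function.Injective fun p : Fin a × Bool =>
        (Sum.inr (p.1, p.2, g p) : Fin a ⊕ Fin a × Bool × Fin (k - 1)) := by
      rintro ⟨i, b⟩ ⟨i', b'⟩ h
      simp only [Sum.inr.injEq, Prod.mk.injEq] at h
      exact Prod.ext h.1 h.2.1
    have : (Finset.univ.filter fun v => c v = j)
        = Finset.univ.map ⟨_, hemb⟩ := by
      ext v
      simp only [Finset.mem_filter, Finset.mem_univ, true_and, Finset.mem_map,
        Function.Embedding.coeFn_mk]
      constructor
      · intro hv
        match v with
        | Sum.inl i => exact absurd (hv.symm.trans (hyi i)) hj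
        | Sum.inr (i, b, x) =>
          refine ⟨(i, b), ?_⟩
          have := (hexu i b).choose_spec.2 x hv
          rw [this]
      · rintro ⟨p, -, rfl⟩
        exact hgspec p
    rw [this, Finset.card_map, Finset.card_univ, Fintype.card_prod, Fintype.card_fin,
      Fintype.card_bool]
    ring
end

section
/- For all integers a ≥ 1 and k ≥ 2, the (a,k)-trem H(a,k) contains no induced subgraph isomorphic to the star K_{1,4}; that is, no vertex of H(a,k) has four pairwise non-adjacent neighbors. -/
theorem trem_adj_lr {a k : ℕ} (i j : Fin a) (b : Bool) (y : Fin (k - 1)) :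
    (trem a k).Adj (.inl i) (.inr (j, b, y)) ↔
      (j = i ∨ (b = false ∧ (j : ℕ) = (i : ℕ) + 1)) := Iff.rfl

theorem trem_adj_rl {a k : ℕ} (i j : Fin a) (b : Bool) (y : Fin (k - 1)) :
    (trem a k).Adj (.inr (j, b, y)) (.inl i) ↔
      (j = i ∨ (b = false ∧ (j : ℕ) = (i : ℕ) + 1)) := Iff.rfl

theorem trem_adj_rr {a k : ℕ} (i j : Fin a) (b c : Bool) (x y : Fin (k - 1)) :
    (trem a k).Adj (.inr (i, b, x)) (.inr (j, c, y)) ↔ (i = j ∧ b = c ∧ x ≠ y) := Iff.rfl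

theorem trem_aux_code {a k : ℕ} {j j' : Fin a} {b b' : Bool} {y y' : Fin (k - 1)}
    (hd : (Sum.inr (j, b, y) : Fin a ⊕ Fin a × Bool × Fin (k - 1)) ≠ .inr (j', b', y'))
    (hn : ¬ (trem a k).Adj (.inr (j, b, y)) (.inr (j', b', y'))) :
    2 * (j : ℕ) + (cond b 1 0 : ℕ) ≠ 2 * (j' : ℕ) + (cond b' 1 0 : ℕ) := by
  intro he
  rw [trem_adj_rr] at hn
  cases b <;> cases b' <;> simp only [Bool.cond_true, Bool.cond_false] at he <;> try omega
  all_goals {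
    have hj : j = j' := Fin.ext (by omega)
    subst hj
    have hy : y = y' := by by_contra hy; exact hn ⟨rfl, rfl, hy⟩
    exact hd (by rw [hy]) }

theorem trem_conv_hl {a k : ℕ} {i j : Fin a} {b : Bool} {y : Fin (k - 1)}
    (h : (trem a k).Adj (.inl i) (.inr (j, b, y))) :
    2 * (j : ℕ) + (cond b 1 0 : ℕ) = 2 * (i : ℕ) ∨
    2 * (j : ℕ) + (cond b 1 0 : ℕ) = 2 * (i : ℕ) + 1 ∨
    2 * (j : ℕ) + (cond b 1 0 : ℕ) = 2 * (i : ℕ) + 2 := by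
  rw [trem_adj_lr] at h
  rcases h with h | ⟨hb, h⟩
  · have hv : (j : ℕ) = (i : ℕ) := congrArg Fin.val h
    cases b
    · exact Or.inl (by show 2 * (j : ℕ) + 0 = 2 * (i : ℕ); omega)
    · exact Or.inr (Or.inl (by show 2 * (j : ℕ) + 1 = 2 * (i : ℕ) + 1; omega))
  · subst hb
    exact Or.inr (Or.inr (by show 2 * (j : ℕ) + 0 = 2 * (i : ℕ) + 2; omega))

theorem trem_aux_two {a k : ℕ} {i₀ j j' : Fin a} {b₀ b b' : Bool} {x₀ : Fin (k - 1)}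
    {y y' : Fin (k - 1)}
    (h : (trem a k).Adj (.inr (i₀, b₀, x₀)) (.inr (j, b, y)))
    (h' : (trem a k).Adj (.inr (i₀, b₀, x₀)) (.inr (j', b', y')))
    (hn : ¬ (trem a k).Adj (.inr (j, b, y)) (.inr (j', b', y'))) :
    (Sum.inr (j, b, y) : Fin a ⊕ Fin a × Bool × Fin (k - 1)) = .inr (j', b', y') := by
  rw [trem_adj_rr] at h h' hn
  obtain ⟨hj, hb, -⟩ := h
  obtain ⟨hj', hb', -⟩ := h'
  have hjj : j = j' := hj ▸ hj'
  have hbb : b = b' := hb ▸ hb'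
  have hy : y = y' := by by_contra hy; exact hn ⟨hjj, hbb, hy⟩
  rw [hjj, hbb, hy]

theorem trem_aux_three (n p q r : ℕ) (h : n = p ∨ n = p + 1) (h' : n = q ∨ n = q + 1)
    (h'' : n = r ∨ n = r + 1) (d : p ≠ q) (d' : p ≠ r) (d'' : q ≠ r) : False := by
  omega

theorem trem_conv_h {a k : ℕ} {i j : Fin a} {b : Bool} {x : Fin (k - 1)}
    (h : (trem a k).Adj (.inr (i, b, x)) (.inl j)) : (i : ℕ) = j ∨ (i : ℕ) = (j : ℕ) + 1 := by
  rw [trem_adj_rl] at h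
  rcases h with h | ⟨-, h⟩
  · exact Or.inl (congrArg Fin.val h)
  · exact Or.inr h

theorem trem_conv_d {a k : ℕ} {j j' : Fin a}
    (hd : (Sum.inl j : Fin a ⊕ Fin a × Bool × Fin (k - 1)) ≠ .inl j') :
    (j : ℕ) ≠ (j' : ℕ) := fun he => hd (congrArg Sum.inl (Fin.ext he))

/-- The `(a,k)`-trem has no induced `K_{1,4}`: no vertex has four pairwise non-adjacent
neighbors. -/
theorem trem_K14_free (a k : ℕ) (ha : 1 ≤ a) (hk : 2 ≤ k) :
    ¬ ∃ v x₁ x₂ x₃ x₄ : Fin a ⊕ Fin a × Bool × Fin (k - 1),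
      (trem a k).Adj v x₁ ∧ (trem a k).Adj v x₂ ∧ (trem a k).Adj v x₃ ∧ (trem a k).Adj v x₄ ∧
      x₁ ≠ x₂ ∧ x₁ ≠ x₃ ∧ x₁ ≠ x₄ ∧ x₂ ≠ x₃ ∧ x₂ ≠ x₄ ∧ x₃ ≠ x₄ ∧
      ¬ (trem a k).Adj x₁ x₂ ∧ ¬ (trem a k).Adj x₁ x₃ ∧ ¬ (trem a k).Adj x₁ x₄ ∧
      ¬ (trem a k).Adj x₂ x₃ ∧ ¬ (trem a k).Adj x₂ x₄ ∧ ¬ (trem a k).Adj x₃ x₄ := by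
  rintro ⟨v, x₁, x₂, x₃, x₄, h1, h2, h3, h4, d12, d13, d14, d23, d24, d34,
    n12, n13, n14, n23, n24, n34⟩
  rcases v with i₀ | ⟨i₀, b₀, x₀⟩
  · rcases x₁ with j₁ | ⟨j₁, b₁, y₁⟩; · exact h1
    rcases x₂ with j₂ | ⟨j₂, b₂, y₂⟩; · exact h2
    rcases x₃ with j₃ | ⟨j₃, b₃, y₃⟩; · exact h3
    rcases x₄ with j₄ | ⟨j₄, b₄, y₄⟩; · exact h4
    have c12 := trem_aux_code d12 n12
    have c13 := trem_aux_code d13 n13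
    have c14 := trem_aux_code d14 n14
    have c23 := trem_aux_code d23 n23
    have c24 := trem_aux_code d24 n24
    have c34 := trem_aux_code d34 n34
    have e1 := trem_conv_hl h1
    have e2 := trem_conv_hl h2
    have e3 := trem_conv_hl h3
    have e4 := trem_conv_hl h4
    omega
  · rcases x₁ with j₁ | ⟨j₁, b₁, y₁⟩ <;>
    rcases x₂ with j₂ | ⟨j₂, b₂, y₂⟩ <;>
    rcases x₃ with j₃ | ⟨j₃, b₃, y₃⟩ <;>
    rcases x₄ with j₄ | ⟨j₄, b₄, y₄⟩ <;>
    first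
    | exact trem_aux_three _ _ _ _ (trem_conv_h h1) (trem_conv_h h2) (trem_conv_h h3)
        (trem_conv_d d12) (trem_conv_d d13) (trem_conv_d d23)
    | exact trem_aux_three _ _ _ _ (trem_conv_h h1) (trem_conv_h h2) (trem_conv_h h4)
        (trem_conv_d d12) (trem_conv_d d14) (trem_conv_d d24)
    | exact trem_aux_three _ _ _ _ (trem_conv_h h1) (trem_conv_h h3) (trem_conv_h h4)
        (trem_conv_d d13) (trem_conv_d d14) (trem_conv_d d34)
    | exact trem_aux_three _ _ _ _ (trem_conv_h h2) (trem_conv_h h3) (trem_conv_h h4)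
        (trem_conv_d d23) (trem_conv_d d24) (trem_conv_d d34)
    | exact d12 (trem_aux_two h1 h2 n12)
    | exact d13 (trem_aux_two h1 h3 n13)
    | exact d14 (trem_aux_two h1 h4 n14)
    | exact d23 (trem_aux_two h2 h3 n23)
    | exact d24 (trem_aux_two h2 h4 n24)
    | exact d34 (trem_aux_two h3 h4 n34)
end

section
/- Let G be a finite simple graph that is chordal (every cycle of length at least 4 has a chord) and claw-free (no induced K_{1,3}), and let φ be a proper coloring of G. Then for any two colors c and d, the subgraph of G induced by the union of the color classes of c and d contains no cycle; hence each of its connected components is a path. -/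
/-- Chordal: every cycle of length at least 4 has a chord, i.e. an edge of the graph
joining two vertices of the cycle which is not an edge of the cycle. -/
def Chordal {V : Type*} (G : SimpleGraph V) : Prop :=
  ∀ (v : V) (w : G.Walk v v), w.IsCycle → 4 ≤ w.length →
    ∃ x y : V, x ∈ w.support ∧ y ∈ w.support ∧ G.Adj x y ∧ s(x, y) ∉ w.edges

open SimpleGraph Walk

private lemma two_of_two {C : Type*} {c d a b e : C}
    (ha : a = c ∨ a = d) (hb : b = c ∨ b = d) (he : e = c ∨ e = d)
    (hab : a ≠ b) (hae : a ≠ e) : b = e := by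
  rcases ha with rfl | rfl <;> rcases hb with rfl | rfl <;> rcases he with rfl | rfl <;> tauto

private lemma mem_tail_of_closed {V : Type*} {G : SimpleGraph V} {u : V}
    (c : G.Walk u u) (hc : c ≠ Walk.nil) (z : V) :
    z ∈ c.support ↔ z ∈ c.support.tail := by
  cases c with
  | nil => exact absurd rfl hc
  | cons h q =>
    simp only [Walk.support_cons, List.tail_cons, List.mem_cons]
    constructor
    · rintro (rfl | hz)
      · exact q.end_mem_support
      · exact hz
    · exact Or.inr

private lemma getVert_inj_of_nodup {V : Type*} {G : SimpleGraph V} :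
    ∀ {u v : V} (p : G.Walk u v), p.support.Nodup →
      ∀ i j, i ≤ p.length → j ≤ p.length → p.getVert i = p.getVert j → i = j := by
  intro u v p
  induction p with
  | nil => intro _ i j hi hj _; simp only [Walk.length_nil, Nat.le_zero] at hi hj; omega
  | @cons a b w h q ih =>
    intro hnd i j hi hj heq
    rw [Walk.support_cons, List.nodup_cons] at hnd
    match i, j with
    | 0, 0 => rfl
    | 0, j + 1 =>
      exfalso
      rw [Walk.getVert_zero, Walk.getVert_cons_succ] at heq
      exact hnd.1 (Walk.mem_support_iff_exists_getVert.mpr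
        ⟨j, heq.symm, by simp only [Walk.length_cons] at hj; omega⟩)
    | i + 1, 0 =>
      exfalso
      rw [Walk.getVert_zero, Walk.getVert_cons_succ] at heq
      exact hnd.1 (Walk.mem_support_iff_exists_getVert.mpr
        ⟨i, heq, by simp only [Walk.length_cons] at hi; omega⟩)
    | i + 1, j + 1 =>
      rw [Walk.getVert_cons_succ, Walk.getVert_cons_succ] at heq
      have := ih hnd.2 i j (by simp only [Walk.length_cons] at hi; omega)
        (by simp only [Walk.length_cons] at hj; omega) heq
      omega

/-- Core lemma: no cycle of `G` can have all its vertices colored with just two colors. -/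
private lemma no_two_color_cycle {V C : Type*} (G : SimpleGraph V)
    (hchordal : Chordal G) (hclaw : ClawFree G)
    (φ : V → C) (hφ : ∀ u v, G.Adj u v → φ u ≠ φ v) (c d : C)
    (v : V) (w : G.Walk v v) (hw : w.IsCycle)
    (hcol : ∀ z ∈ w.support, φ z = c ∨ φ z = d) : False := by
  classical
  have h3 : 3 ≤ w.length := hw.three_le_length
  have h4 : 4 ≤ w.length := by
    by_contra hcon
    have hl : w.length = 3 := by omega
    set a := w.getVert 1 with ha
    set b := w.getVert 2 with hb
    have hadj1 : G.Adj v a := by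
      have := w.adj_getVert_succ (i := 0) (by omega)
      simpa [w.getVert_zero] using this
    have hadj2 : G.Adj a b := w.adj_getVert_succ (by omega)
    have hadj3 : G.Adj b v := by
      have := w.adj_getVert_succ (i := 2) (by omega)
      rw [show (2 : ℕ) + 1 = w.length by omega, w.getVert_length] at this
      exact this
    have hcv := hcol v w.start_mem_support
    have hca := hcol a (Walk.mem_support_iff_exists_getVert.mpr ⟨1, rfl, by omega⟩)
    have hcb := hcol b (Walk.mem_support_iff_exists_getVert.mpr ⟨2, rfl, by omega⟩)
    exact (hφ v a hadj1) (two_of_two hcb hcv hca (fun h => hφ b v hadj3 h)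
      (fun h => hφ a b hadj2 h.symm))
  obtain ⟨x, y, hx, hy, hadj, hne⟩ := hchordal v w hw h4
  have hpc : (w.rotate x hx).IsCycle := hw.rotate hx
  have hwnil : w ≠ Walk.nil := hw.ne_nil
  have hpnil : w.rotate x hx ≠ Walk.nil := hpc.ne_nil
  have hmemsup : ∀ z, z ∈ (w.rotate x hx).support ↔ z ∈ w.support := by
    intro z
    rw [mem_tail_of_closed _ hpnil, mem_tail_of_closed _ hwnil,
      (Walk.support_rotate w x hx).mem_iff]
  have hedges : ∀ e, e ∈ (w.rotate x hx).edges ↔ e ∈ w.edges :=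
    fun e => (Walk.rotate_edges w x hx).mem_iff
  have hlp : (w.rotate x hx).length = w.length := by
    have h1 := (Walk.rotate_edges w x hx).perm.length_eq
    rw [Walk.length_edges, Walk.length_edges] at h1
    exact h1
  obtain ⟨x₁, h1, q, hpq⟩ := Walk.not_nil_iff.mp hpc.not_nil
  have hqlen : q.length = w.length - 1 := by
    have := hlp
    rw [hpq, Walk.length_cons] at this
    omega
  have hqrnil : ¬ q.reverse.Nil := by
    rw [Walk.nil_iff_length_eq, Walk.length_reverse]
    omega
  obtain ⟨x₂, h2, q2, hq2⟩ := Walk.not_nil_iff.mp hqrnil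
  -- edge facts
  have hedge1 : s(x, x₁) ∈ w.edges := by
    rw [← hedges, hpq, Walk.edges_cons]
    exact List.mem_cons_self
  have hedge2 : s(x, x₂) ∈ w.edges := by
    rw [← hedges, hpq, Walk.edges_cons]
    refine List.mem_cons_of_mem _ ?_
    have : s(x, x₂) ∈ q.reverse.edges := by
      rw [hq2, Walk.edges_cons]; exact List.mem_cons_self
    rwa [Walk.edges_reverse, List.mem_reverse] at this
  -- support facts
  have hx1sup : x₁ ∈ w.support := by
    rw [← hmemsup, hpq, Walk.support_cons]
    exact List.mem_cons_of_mem _ q.start_mem_support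
  have hx2sup : x₂ ∈ w.support := by
    rw [← hmemsup, hpq, Walk.support_cons]
    refine List.mem_cons_of_mem _ ?_
    have : x₂ ∈ q.reverse.support := by
      rw [hq2, Walk.support_cons]
      exact List.mem_cons_of_mem _ q2.start_mem_support
    rwa [Walk.support_reverse, List.mem_reverse] at this
  -- distinctness
  have hyne1 : x₁ ≠ y := by rintro rfl; exact hne hedge1
  have hyne2 : x₂ ≠ y := by rintro rfl; exact hne hedge2
  have h12 : x₁ ≠ x₂ := by
    intro heq
    -- q has nodup support since (rotate) is a cycle
    have hqnd : q.support.Nodup := by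
      have := hpc.support_nodup
      rw [hpq, Walk.support_cons, List.tail_cons] at this
      exact this
    have hqrnd : q.reverse.support.Nodup := by
      rw [Walk.support_reverse, List.nodup_reverse]; exact hqnd
    have hq2nd : q2.support.Nodup := by
      rw [hq2, Walk.support_cons, List.nodup_cons] at hqrnd
      exact hqrnd.2
    have hq2len : q2.length = w.length - 2 := by
      have := congrArg Walk.length hq2
      rw [Walk.length_reverse, Walk.length_cons] at this
      omega
    subst heq
    have : q2.IsPath := (Walk.isPath_def _).mpr hq2nd
    rw [Walk.isPath_iff_eq_nil] at this
    rw [this] at hq2len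
    simp at hq2len
    omega
  -- colors
  have hcx := hcol x hx
  have hcy := hcol y hy
  have hcx1 := hcol x₁ hx1sup
  have hcx2 := hcol x₂ hx2sup
  have hne_x1 : φ x ≠ φ x₁ := hφ x x₁ h1
  have hne_x2 : φ x ≠ φ x₂ := hφ x x₂ h2
  have hne_xy : φ x ≠ φ y := hφ x y hadj
  rcases hclaw x x₁ x₂ y h1 h2 hadj h12 hyne1 hyne2 with h | h | h
  · exact hφ _ _ h (two_of_two hcx hcx1 hcx2 hne_x1 hne_x2)
  · exact hφ _ _ h (two_of_two hcx hcx1 hcy hne_x1 hne_xy)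
  · exact hφ _ _ h (two_of_two hcx hcx2 hcy hne_x2 hne_xy)

/-- In a properly colored chordal claw-free graph, the subgraph induced by the union of any
two color classes is acyclic, and each of its connected components is a path. -/
theorem chordal_clawfree_two_classes_union_of_paths
    {V C : Type*} [Fintype V] (G : SimpleGraph V)
    (hchordal : Chordal G) (hclaw : ClawFree G)
    (φ : V → C) (hφ : ∀ u v, G.Adj u v → φ u ≠ φ v) (c d : C) :
    (∀ (v : {u : V // φ u = c ∨ φ u = d})
        (w : (G.induce {u : V | φ u = c ∨ φ u = d}).Walk v v), ¬ w.IsCycle) ∧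
    ∀ comp : (G.induce {u : V | φ u = c ∨ φ u = d}).ConnectedComponent,
      ∃ (x y : {u : V // φ u = c ∨ φ u = d})
        (p : (G.induce {u : V | φ u = c ∨ φ u = d}).Walk x y), p.IsPath ∧
        ∀ w, w ∈ p.support ↔
          (G.induce {u : V | φ u = c ∨ φ u = d}).connectedComponentMk w = comp := by
  classical
  set s : Set V := {u : V | φ u = c ∨ φ u = d} with hs
  set H : SimpleGraph s := G.induce s with hH
  haveI : Fintype s := Fintype.ofFinite _
  -- the inclusion homomorphism
  let f : H →g G := ⟨Subtype.val, fun {a b} h => h⟩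
  have hfinj : Function.Injective f := Subtype.val_injective
  -- adjacency transfer
  have toG : ∀ {a b : s}, H.Adj a b → G.Adj ↑a ↑b := fun h => h
  constructor
  · -- no cycles
    intro v w hw
    have hw' : (w.map f).IsCycle := hw.map hfinj
    refine no_two_color_cycle G hchordal hclaw φ hφ c d ↑v (w.map f) hw' ?_
    intro z hz
    rw [Walk.support_map, List.mem_map] at hz
    obtain ⟨z', _, rfl⟩ := hz
    exact z'.2
  · intro comp
    -- degree at most two
    have deg2 : ∀ (u a b e : s), H.Adj u a → H.Adj u b → H.Adj u e →
        a = b ∨ a = e ∨ b = e := by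
      intro u a b e hua hub hue
      by_contra hcon
      push_neg at hcon
      obtain ⟨hab, hae, hbe⟩ := hcon
      have hab' : (a : V) ≠ b := fun h => hab (Subtype.ext h)
      have hae' : (a : V) ≠ e := fun h => hae (Subtype.ext h)
      have hbe' : (b : V) ≠ e := fun h => hbe (Subtype.ext h)
      have hne_a : φ ↑u ≠ φ ↑a := hφ _ _ (toG hua)
      have hne_b : φ ↑u ≠ φ ↑b := hφ _ _ (toG hub)
      have hne_e : φ ↑u ≠ φ ↑e := hφ _ _ (toG hue)
      rcases hclaw ↑u ↑a ↑b ↑e (toG hua) (toG hub) (toG hue) hab' hae' hbe' with h | h | h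
      · exact hφ _ _ h (two_of_two u.2 a.2 b.2 hne_a hne_b)
      · exact hφ _ _ h (two_of_two u.2 a.2 e.2 hne_a hne_e)
      · exact hφ _ _ h (two_of_two u.2 b.2 e.2 hne_b hne_e)
    obtain ⟨x₀, hx₀⟩ := comp.exists_rep
    set P : ℕ → Prop := fun n => ∃ (x y : s) (p : H.Walk x y), p.IsPath ∧
      H.connectedComponentMk x = comp ∧ p.length = n with hP
    have hP0 : P 0 := ⟨x₀, x₀, Walk.nil, Walk.IsPath.nil, hx₀, rfl⟩
    have hbound : ∀ m, P m → m < Fintype.card s := by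
      rintro m ⟨x, y, p, hp, -, hlen⟩
      exact hlen ▸ hp.length_lt
    set n := Nat.findGreatest P (Fintype.card s) with hn
    have hPn : P n := Nat.findGreatest_spec (Nat.zero_le _) hP0
    have hmax : ∀ m, P m → m ≤ n :=
      fun m hm => Nat.le_findGreatest (le_of_lt (hbound m hm)) hm
    obtain ⟨x, y, p, hp, hxc, hlen⟩ := hPn
    -- the support of p is closed under adjacency
    have closed : ∀ (a b : s), a ∈ p.support → H.Adj a b → b ∈ p.support := by
      intro a b ha hadj
      by_cases hb : b ∈ p.support
      · exact hb
      exfalso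
      obtain ⟨i, hgv, hi⟩ := Walk.mem_support_iff_exists_getVert.mp ha
      rcases Nat.lt_or_ge 0 i with hi0 | hi0
      swap
      · -- i = 0, a = x : extend at the start
        have hax : a = x := by
          have : i = 0 := by omega
          rw [this, Walk.getVert_zero] at hgv
          exact hgv.symm
        subst hax
        have hq : (Walk.cons hadj.symm p).IsPath := hp.cons hb
        have : P (n + 1) := ⟨b, y, Walk.cons hadj.symm p, hq,
          (ConnectedComponent.connectedComponentMk_eq_of_adj hadj.symm).trans hxc,
          by rw [Walk.length_cons, hlen]⟩
        exact absurd (hmax _ this) (by omega)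
      rcases Nat.lt_or_ge i p.length with hil | hil
      swap
      · -- i = length, a = y : extend at the end
        have hay : a = y := by
          have : i = p.length := by omega
          rw [this, Walk.getVert_length] at hgv
          exact hgv.symm
        subst hay
        have hbr : b ∉ p.reverse.support := by
          rwa [Walk.support_reverse, List.mem_reverse]
        have hq : (Walk.cons hadj.symm p.reverse).IsPath := hp.reverse.cons hbr
        have : P (n + 1) := ⟨b, x, Walk.cons hadj.symm p.reverse, hq,
          (ConnectedComponent.connectedComponentMk_eq_of_adj hadj.symm).trans
            ((ConnectedComponent.sound ⟨p.reverse⟩).trans hxc),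
          by rw [Walk.length_cons, Walk.length_reverse, hlen]⟩
        exact absurd (hmax _ this) (by omega)
      -- interior vertex: degree two argument
      have ha1 : H.Adj a (p.getVert (i - 1)) := by
        have := p.adj_getVert_succ (i := i - 1) (by omega)
        rw [show i - 1 + 1 = i by omega, hgv] at this
        exact this.symm
      have ha2 : H.Adj a (p.getVert (i + 1)) := by
        have := p.adj_getVert_succ (i := i) hil
        rwa [hgv] at this
      have h12 : p.getVert (i - 1) ≠ p.getVert (i + 1) := by
        intro heq
        have := getVert_inj_of_nodup p hp.support_nodup (i - 1) (i + 1)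
          (by omega) (by omega) heq
        omega
      rcases deg2 a b (p.getVert (i - 1)) (p.getVert (i + 1)) hadj ha1 ha2 with h | h | h
      · exact hb (h ▸ Walk.mem_support_iff_exists_getVert.mpr ⟨i - 1, rfl, by omega⟩)
      · exact hb (h ▸ Walk.mem_support_iff_exists_getVert.mpr ⟨i + 1, rfl, by omega⟩)
      · exact h12 h
    -- reachability closure
    have reachmem : ∀ {a b : s} (q : H.Walk a b), a ∈ p.support → b ∈ p.support := by
      intro a b q
      induction q with
      | nil => exact id
      | cons h q ih => exact fun ha => ih (closed _ _ ha h)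
    refine ⟨x, y, p, hp, fun w => ⟨?_, ?_⟩⟩
    · intro hw
      have : H.connectedComponentMk w = H.connectedComponentMk x :=
        ConnectedComponent.sound ⟨(p.takeUntil w hw).reverse⟩
      rw [this, hxc]
    · intro hw
      obtain ⟨q⟩ := ConnectedComponent.exact (hxc.trans hw.symm)
      exact reachmem q p.start_mem_support
end
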